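/- arXiv:1911.03345 — 3 statements merged into one kernel-verified Lean document; each statement's English description precedes it below -/
import Mathlib

section
/- Let R be a ring, A an abelian category (e.g. Mod R), and X a class of objects containing 0. If X is special precovering (every object M admits an epimorphism f : G → M with G ∈ X and ker f ∈ X^⊥, where X^⊥ = {M : Ext¹(X,M) = 0 for all X ∈ X}), then the class Smd(X) of direct summands of objects of X satisfies ^⊥(Smd(X)^⊥) = Smd(X); that is, (Smd(X), Smd(X)^⊥) is a cotorsion pair. -/
/-!
STATEMENT 0: Let `A` be an abelian category (with enough injectives) and `X` a class of
objects containing `0`. If `X` is special precovering, then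
`^⊥(Smd(X)^⊥) = Smd(X)`; i.e. `(Smd(X), Smd(X)^⊥)` is a cotorsion pair.
-/

open CategoryTheory CategoryTheory.Limits CategoryTheory.Abelian ZeroObject

universe w v u

variable {A : Type u} [Category.{v} A] [Abelian A] [EnoughInjectives A] [HasExt.{w} A]

/-- The right Ext¹-orthogonal class of a class of objects. -/
def rightPerp (L : Set A) : Set A :=
  {M | ∀ X ∈ L, Subsingleton (Abelian.Ext X M 1)}

/-- The left Ext¹-orthogonal class of a class of objects. -/
def leftPerp (L : Set A) : Set A :=
  {M | ∀ X ∈ L, Subsingleton (Abelian.Ext M X 1)}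

/-- The class of direct summands of objects of `L` (up to isomorphism). -/
def Smd (L : Set A) : Set A :=
  {X | ∃ (Y Z : A), Z ∈ L ∧ Nonempty (Z ≅ X ⊞ Y)}

/-- `L` is special precovering: every object `M` admits an epimorphism `f : G ⟶ M`
with `G ∈ L` and `ker f ∈ L^⊥`. -/
def SpecialPrecovering (L : Set A) : Prop :=
  ∀ M : A, ∃ (G : A) (f : G ⟶ M), Epi f ∧ G ∈ L ∧ kernel f ∈ rightPerp L

/-- Ext-vanishing passes to direct summands in the first variable. -/
lemma ext_subsingleton_of_summand {C : Type u} [Category.{v} C] [Abelian C] [HasExt.{w} C]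
    {N Y Z W : C} (e : Z ≅ N ⊞ Y) {n : ℕ}
    (h : Subsingleton (Abelian.Ext Z W n)) : Subsingleton (Abelian.Ext N W n) := by
  constructor
  intro α β
  have key : ∀ γ : Abelian.Ext N W n,
      (Abelian.Ext.mk₀ (biprod.inl ≫ e.inv)).comp
        ((Abelian.Ext.mk₀ (e.hom ≫ biprod.fst)).comp γ (zero_add n)) (zero_add n) = γ := by
    intro γ
    rw [Abelian.Ext.mk₀_comp_mk₀_assoc]
    have : (biprod.inl ≫ e.inv) ≫ e.hom ≫ biprod.fst = 𝟙 N := by simp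
    rw [this, Abelian.Ext.mk₀_id_comp]
  have heq := h.elim ((Abelian.Ext.mk₀ (e.hom ≫ biprod.fst)).comp α (zero_add n))
      ((Abelian.Ext.mk₀ (e.hom ≫ biprod.fst)).comp β (zero_add n))
  calc α = _ := (key α).symm
    _ = _ := by rw [heq]
    _ = β := key β

/-- The homology in degree `0` of the single complex associated to `Z` is `Z`. -/
noncomputable def singleHomologyIso {C : Type u} [Category.{v} C] [Abelian C]
    [HasDerivedCategory C] (Z : C) :
    (DerivedCategory.homologyFunctor C 0).obj ((DerivedCategory.singleFunctor C 0).obj Z) ≅ Z :=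
  (DerivedCategory.homologyFunctor C 0).mapIso
      (((SingleFunctors.evaluation _ _ 0).mapIso
        (DerivedCategory.singleFunctorsPostcompQIso C)).app Z) ≪≫
    (DerivedCategory.homologyFunctorFactors C 0).app
      ((CochainComplex.singleFunctor C 0).obj Z) ≪≫
    (HomologicalComplex.homologyFunctorSingleIso C (ComplexShape.up ℤ) 0).app Z

theorem leftPerp_rightPerp_smd (X : Set A) (h0 : (0 : A) ∈ X)
    (h : SpecialPrecovering X) :
    leftPerp (rightPerp (Smd X)) = Smd X := by
  apply subset_antisymm
  · intro M hM
    obtain ⟨G, f, hepi, hG, hK⟩ := h M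
    have hKperp : kernel f ∈ rightPerp (Smd X) := by
      rintro N ⟨Y, Z, hZ, ⟨e⟩⟩
      exact ext_subsingleton_of_summand e (hK Z hZ)
    have hsub : Subsingleton (Abelian.Ext M (kernel f) 1) := hM _ hKperp
    haveI := hepi
    let S : ShortComplex A := ShortComplex.mk (kernel.ι f) f (kernel.condition f)
    have hS : S.ShortExact := { exact := CategoryTheory.ShortComplex.exact_kernel f }
    have hcls : hS.extClass = 0 := hsub.elim _ _
    letI := HasDerivedCategory.standard A
    have hδ : hS.singleTriangle.mor₃ = 0 := by
      change hS.singleδ = 0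
      rw [← hS.extClass_hom, hcls, Abelian.Ext.zero_hom]
    obtain ⟨e, -, -⟩ := Pretriangulated.exists_iso_binaryBiproduct_of_distTriang _
      hS.singleTriangle_distinguished hδ
    haveI : PreservesBinaryBiproducts (DerivedCategory.homologyFunctor A 0) :=
      preservesBinaryBiproducts_of_preservesBiproducts _
    have isoG : G ≅ M ⊞ kernel f :=
      (singleHomologyIso G).symm ≪≫ (DerivedCategory.homologyFunctor A 0).mapIso e ≪≫
        (DerivedCategory.homologyFunctor A 0).mapBiprod _ _ ≪≫
        biprod.mapIso (singleHomologyIso (kernel f)) (singleHomologyIso M) ≪≫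
        biprod.braiding _ _
    exact ⟨kernel f, G, hG, ⟨isoG⟩⟩
  · intro N hN W hW
    exact hW N hN
end

section
/- Let A be an abelian category with enough projectives and enough injectives, and let (H, G) be a cotorsion pair in A (i.e. H^⊥ = G and ^⊥G = H). Then the following are equivalent: (1) Ext^i(X, Y) = 0 for all X ∈ H, Y ∈ G and all i > 0; (2) H is resolving (contains the projectives and is closed under extensions and kernels of epimorphisms between its objects); (3) G is coresolving (contains the injectives and is closed under extensions and cokernels of monomorphisms between its objects). -/
/-!
STATEMENT 9: Let `A` be an abelian category with enough projectives and injectives and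
`(H, G)` a cotorsion pair. TFAE:
(1) `Ext^i(X, Y) = 0` for all `X ∈ H`, `Y ∈ G`, `i > 0`;
(2) `H` is resolving;
(3) `G` is coresolving.
-/

open CategoryTheory CategoryTheory.Limits CategoryTheory.Abelian

universe w w' v u

variable {A : Type u} [Category.{v} A] [Abelian A]
  [EnoughProjectives A] [EnoughInjectives A] [HasExt.{w} A]

/-- `(H, G)` is a cotorsion pair: `H^⊥ = G` and `^⊥G = H`. -/
def IsCotorsionPair (H G : Set A) : Prop :=
  rightPerp H = G ∧ leftPerp G = H

/-- `L` is resolving: it contains all projectives, and for every short exact sequence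
`0 → X₁ → X₂ → X₃ → 0` with `X₃ ∈ L`, one has `X₁ ∈ L ↔ X₂ ∈ L`. -/
def Resolving (L : Set A) : Prop :=
  (∀ P : A, Projective P → P ∈ L) ∧
  (∀ S : ShortComplex A, S.ShortExact → S.X₃ ∈ L → (S.X₁ ∈ L ↔ S.X₂ ∈ L))

/-- `L` is coresolving: it contains all injectives, and for every short exact sequence
`0 → X₁ → X₂ → X₃ → 0` with `X₁ ∈ L`, one has `X₃ ∈ L ↔ X₂ ∈ L`. -/
def Coresolving (L : Set A) : Prop :=
  (∀ I : A, Injective I → I ∈ L) ∧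
  (∀ S : ShortComplex A, S.ShortExact → S.X₁ ∈ L → (S.X₃ ∈ L ↔ S.X₂ ∈ L))

open HomologicalComplex in
noncomputable def nullHomotopyFromSingleProjective {P : A} [Projective P] (m : ℤ)
    (Z : CochainComplex A ℤ) (hZ : Z.ExactAt m)
    (g : (single A (ComplexShape.up ℤ) m).obj P ⟶ Z) : Homotopy g 0 := by
  haveI : Projective (((single A (ComplexShape.up ℤ) m).obj P).X m) :=
    Projective.of_iso (singleObjXSelf (ComplexShape.up ℤ) m P).symm inferInstance
  have hexact : (Z.sc' (m - 1) m (m + 1)).Exact :=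
    (Z.exactAt_iff' (m - 1) m (m + 1) (by simp) (by simp)).1 hZ
  have hu : g.f m ≫ (Z.sc' (m - 1) m (m + 1)).g = 0 := by
    have := g.comm m (m + 1)
    show g.f m ≫ Z.d m (m + 1) = 0
    rw [this, single_obj_d, zero_comp]
  have hl := hexact.liftFromProjective_comp (g.f m) hu
  set l := hexact.liftFromProjective (g.f m) hu with hldef
  refine ⟨fun i j => if h : i = m ∧ j = m - 1 then
      (XIsoOfEq ((single A (ComplexShape.up ℤ) m).obj P) h.1).hom ≫ l ≫ (Z.XIsoOfEq h.2).inv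
    else 0, ?_, ?_⟩
  · intro i j hij
    rw [dif_neg]
    rintro ⟨rfl, rfl⟩
    exact hij (by simp)
  · intro i
    by_cases hi : i = m
    · subst hi
      rw [dNext_eq _ (show (ComplexShape.up ℤ).Rel i (i + 1) by simp),
        prevD_eq _ (show (ComplexShape.up ℤ).Rel (i - 1) i by simp)]
      rw [single_obj_d, zero_comp, dif_pos ⟨rfl, rfl⟩]
      simp only [XIsoOfEq, eqToIso_refl, Iso.refl_hom, Iso.refl_inv, Category.id_comp,
        Category.comp_id, zero_add]
      exact hl.symm.trans (by erw [Category.comp_id, HomologicalComplex.zero_f, add_zero]; rfl)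
    · exact (isZero_single_obj_X (ComplexShape.up ℤ) m P i hi).eq_of_src _ _

open HomologicalComplex in
noncomputable def nullHomotopyToSingleInjective {I : A} [Injective I] (m : ℤ)
    (Z : CochainComplex A ℤ) (hZ : Z.ExactAt m)
    (g : Z ⟶ (single A (ComplexShape.up ℤ) m).obj I) : Homotopy g 0 := by
  haveI : Injective (((single A (ComplexShape.up ℤ) m).obj I).X m) :=
    Injective.of_iso (singleObjXSelf (ComplexShape.up ℤ) m I).symm inferInstance
  have hexact : (Z.sc' (m - 1) m (m + 1)).Exact :=
    (Z.exactAt_iff' (m - 1) m (m + 1) (by simp) (by simp)).1 hZ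
  have hu : (Z.sc' (m - 1) m (m + 1)).f ≫ g.f m = 0 := by
    have := g.comm (m - 1) m
    show Z.d (m - 1) m ≫ g.f m = 0
    rw [← this, single_obj_d, comp_zero]
  have hk := hexact.comp_descToInjective (g.f m) hu
  set k := hexact.descToInjective (g.f m) hu with hkdef
  refine ⟨fun i j => if h : i = m + 1 ∧ j = m then
      (Z.XIsoOfEq h.1).hom ≫ k ≫ (XIsoOfEq ((single A (ComplexShape.up ℤ) m).obj I) h.2).inv
    else 0, ?_, ?_⟩
  · intro i j hij
    rw [dif_neg]
    rintro ⟨rfl, rfl⟩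
    exact hij (by simp)
  · intro i
    by_cases hi : i = m
    · subst hi
      rw [dNext_eq _ (show (ComplexShape.up ℤ).Rel i (i + 1) by simp),
        prevD_eq _ (show (ComplexShape.up ℤ).Rel (i - 1) i by simp)]
      rw [single_obj_d, comp_zero, dif_pos ⟨rfl, rfl⟩]
      simp only [XIsoOfEq, eqToIso_refl, Iso.refl_hom, Iso.refl_inv, Category.id_comp,
        Category.comp_id, add_zero, zero_add]
      exact hk.symm.trans (by erw [Category.comp_id, HomologicalComplex.zero_f, add_zero]; rfl)
    · exact (isZero_single_obj_X (ComplexShape.up ℤ) m I i hi).eq_of_tgt _ _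

open DerivedCategory HomotopyCategory in
lemma fromSingleProjective_eq_zero [HasDerivedCategory.{w'} A] {P : A} [Projective P] (m : ℤ)
    (M : HomotopyCategory A (ComplexShape.up ℤ))
    (hM : IsZero ((homologyFunctor A (ComplexShape.up ℤ) m).obj M))
    (f : Qh.obj ((quotient A (ComplexShape.up ℤ)).obj
        ((HomologicalComplex.single A (ComplexShape.up ℤ) m).obj P)) ⟶ Qh.obj M) :
    f = 0 := by
  obtain ⟨φ, rfl⟩ := Localization.exists_leftFraction Qh (subcategoryAcyclic A).trW f
  have hs : quasiIso A (ComplexShape.up ℤ) φ.s := by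
    rw [quasiIso_eq_subcategoryAcyclic_W]; exact φ.hs
  rw [mem_quasiIso_iff] at hs
  have hZ : IsZero ((homologyFunctor A (ComplexShape.up ℤ) m).obj φ.Y') :=
    hM.of_iso (asIso ((homologyFunctor A (ComplexShape.up ℤ) m).map φ.s)).symm
  obtain ⟨g, hg⟩ := (quotient A (ComplexShape.up ℤ)).map_surjective
    (X := (HomologicalComplex.single A (ComplexShape.up ℤ) m).obj P) (Y := φ.Y'.as) φ.f
  have hZc : (φ.Y').as.ExactAt m := by
    rw [HomologicalComplex.exactAt_iff_isZero_homology]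
    exact hZ.of_iso ((homologyFunctorFactors A (ComplexShape.up ℤ) m).app φ.Y'.as).symm
  have hf0 : φ.f = 0 := by
    rw [← hg, eq_of_homotopy _ _ (nullHomotopyFromSingleProjective m φ.Y'.as hZc g),
      Functor.map_zero]
    rfl
  haveI := Localization.inverts Qh (subcategoryAcyclic A).trW _ φ.hs
  have : φ.map Qh (Localization.inverts Qh (subcategoryAcyclic A).trW) =
      Qh.map φ.f ≫ inv (Qh.map φ.s) := rfl
  rw [this, hf0, Functor.map_zero, Limits.zero_comp]

open DerivedCategory HomotopyCategory in
lemma toSingleInjective_eq_zero [HasDerivedCategory.{w'} A] {I : A} [Injective I] (m : ℤ)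
    (M : HomotopyCategory A (ComplexShape.up ℤ))
    (hM : IsZero ((homologyFunctor A (ComplexShape.up ℤ) m).obj M))
    (f : Qh.obj M ⟶ Qh.obj ((quotient A (ComplexShape.up ℤ)).obj
        ((HomologicalComplex.single A (ComplexShape.up ℤ) m).obj I))) :
    f = 0 := by
  obtain ⟨φ, rfl⟩ := Localization.exists_rightFraction Qh (subcategoryAcyclic A).trW f
  have hs : quasiIso A (ComplexShape.up ℤ) φ.s := by
    rw [quasiIso_eq_subcategoryAcyclic_W]; exact φ.hs
  rw [mem_quasiIso_iff] at hs
  have hZ : IsZero ((homologyFunctor A (ComplexShape.up ℤ) m).obj φ.X') :=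
    hM.of_iso (asIso ((homologyFunctor A (ComplexShape.up ℤ) m).map φ.s))
  obtain ⟨g, hg⟩ := (quotient A (ComplexShape.up ℤ)).map_surjective
    (X := φ.X'.as) (Y := (HomologicalComplex.single A (ComplexShape.up ℤ) m).obj I) φ.f
  have hZc : (φ.X').as.ExactAt m := by
    rw [HomologicalComplex.exactAt_iff_isZero_homology]
    exact hZ.of_iso ((homologyFunctorFactors A (ComplexShape.up ℤ) m).app φ.X'.as).symm
  have hf0 : φ.f = 0 := by
    rw [← hg, eq_of_homotopy _ _ (nullHomotopyToSingleInjective m φ.X'.as hZc g),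
      Functor.map_zero]
    rfl
  haveI := Localization.inverts Qh (subcategoryAcyclic A).trW _ φ.hs
  have : φ.map Qh (Localization.inverts Qh (subcategoryAcyclic A).trW) =
      inv (Qh.map φ.s) ≫ Qh.map φ.f := rfl
  rw [this, hf0, Functor.map_zero, Limits.comp_zero]


lemma ext_subsingleton_of_projective {P Y : A} (hP : Projective P) {n : ℕ} (hn : 0 < n) :
    Subsingleton (Ext P Y n) := by
  haveI := hP
  letI := HasDerivedCategory.standard A
  suffices h : ∀ x : Ext P Y n, x = 0 by exact ⟨fun a b => by rw [h a, h b]⟩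
  intro x
  apply Ext.ext
  rw [Ext.zero_hom]
  have hM : IsZero ((HomotopyCategory.homologyFunctor A (ComplexShape.up ℤ) 0).obj
      ((HomotopyCategory.quotient A (ComplexShape.up ℤ)).obj
        ((HomologicalComplex.single A (ComplexShape.up ℤ) (-(n : ℤ))).obj Y))) :=
    (HomologicalComplex.isZero_single_obj_homology _ _ Y 0 (by omega)).of_iso
      ((HomotopyCategory.homologyFunctorFactors A (ComplexShape.up ℤ) 0).app _)
  have hzero := fromSingleProjective_eq_zero (P := P) 0 _ hM
    (x.hom ≫ ((DerivedCategory.singleFunctors A).shiftIso (n : ℤ) (-(n : ℤ)) 0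
      (by omega)).hom.app Y)
  rw [← cancel_mono (((DerivedCategory.singleFunctors A).shiftIso (n : ℤ) (-(n : ℤ)) 0
    (by omega)).hom.app Y), Limits.zero_comp]
  exact hzero

lemma ext_subsingleton_of_injective {X I : A} (hI : Injective I) {n : ℕ} (hn : 0 < n) :
    Subsingleton (Ext X I n) := by
  haveI := hI
  letI := HasDerivedCategory.standard A
  suffices h : ∀ x : Ext X I n, x = 0 by exact ⟨fun a b => by rw [h a, h b]⟩
  intro x
  apply Ext.ext
  rw [Ext.zero_hom]
  have hM : IsZero ((HomotopyCategory.homologyFunctor A (ComplexShape.up ℤ) (-(n : ℤ))).obj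
      ((HomotopyCategory.quotient A (ComplexShape.up ℤ)).obj
        ((HomologicalComplex.single A (ComplexShape.up ℤ) 0).obj X))) :=
    (HomologicalComplex.isZero_single_obj_homology _ _ X (-(n : ℤ)) (by omega)).of_iso
      ((HomotopyCategory.homologyFunctorFactors A (ComplexShape.up ℤ) (-(n : ℤ))).app _)
  have hzero := toSingleInjective_eq_zero (I := I) (-(n : ℤ)) _ hM
    (x.hom ≫ ((DerivedCategory.singleFunctors A).shiftIso (n : ℤ) (-(n : ℤ)) 0
      (by omega)).hom.app I)
  rw [← cancel_mono (((DerivedCategory.singleFunctors A).shiftIso (n : ℤ) (-(n : ℤ)) 0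
    (by omega)).hom.app I), Limits.zero_comp]
  exact hzero

theorem hereditary_tfae (H G : Set A) (hpair : IsCotorsionPair H G) :
    ((∀ X ∈ H, ∀ Y ∈ G, ∀ i : ℕ, 0 < i → Subsingleton (Abelian.Ext X Y i)) ↔
      Resolving H) ∧
    ((∀ X ∈ H, ∀ Y ∈ G, ∀ i : ℕ, 0 < i → Subsingleton (Abelian.Ext X Y i)) ↔
      Coresolving G) := by
  obtain ⟨hG, hH⟩ := hpair
  have memH : ∀ {X : A}, X ∈ H ↔ ∀ Y ∈ G, Subsingleton (Ext X Y 1) := by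
    intro X; rw [← hH]; exact Iff.rfl
  have memG : ∀ {Y : A}, Y ∈ G ↔ ∀ X ∈ H, Subsingleton (Ext X Y 1) := by
    intro Y; rw [← hG]; exact Iff.rfl
  have extH : ∀ {S : ShortComplex A}, S.ShortExact → S.X₁ ∈ H → S.X₃ ∈ H → S.X₂ ∈ H := by
    intro S hS h1 h3
    refine memH.mpr fun Y hY => (subsingleton_iff_forall_eq 0).mpr fun x => ?_
    have hx : (Ext.mk₀ S.f).comp x (zero_add 1) = 0 :=
      @Subsingleton.elim _ (memH.mp h1 Y hY) _ _
    obtain ⟨x₁, hx₁⟩ := Ext.contravariant_sequence_exact₂ hS Y x hx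
    haveI := memH.mp h3 Y hY
    rw [← hx₁, Subsingleton.elim x₁ 0, Ext.comp_zero]
  have extG : ∀ {S : ShortComplex A}, S.ShortExact → S.X₁ ∈ G → S.X₃ ∈ G → S.X₂ ∈ G := by
    intro S hS h1 h3
    refine memG.mpr fun X hX => (subsingleton_iff_forall_eq 0).mpr fun x => ?_
    have hx : x.comp (Ext.mk₀ S.g) (add_zero 1) = 0 :=
      @Subsingleton.elim _ (memG.mp h3 X hX) _ _
    obtain ⟨x₁, hx₁⟩ := Ext.covariant_sequence_exact₂ X hS x hx
    haveI := memG.mp h1 X hX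
    rw [← hx₁, Subsingleton.elim x₁ 0, Ext.zero_comp]
  have h1R : (∀ X ∈ H, ∀ Y ∈ G, ∀ i : ℕ, 0 < i → Subsingleton (Ext X Y i)) → Resolving H := by
    intro h1
    refine ⟨fun P hP => memH.mpr fun Y hY => ext_subsingleton_of_projective hP one_pos, ?_⟩
    intro S hS h3
    constructor
    · intro hX₁
      exact extH hS hX₁ h3
    · intro hX₂
      refine memH.mpr fun Y hY => (subsingleton_iff_forall_eq 0).mpr fun x => ?_
      have hc : hS.extClass.comp x (by omega : 1 + 1 = 2) = 0 :=
        @Subsingleton.elim _ (h1 S.X₃ h3 Y hY 2 (by omega)) _ _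
      obtain ⟨x₂, hx₂⟩ := Ext.contravariant_sequence_exact₁ hS Y x (by omega) hc
      haveI := memH.mp hX₂ Y hY
      rw [← hx₂, Subsingleton.elim x₂ 0, Ext.comp_zero]
  have hR1 : Resolving H →
      (∀ X ∈ H, ∀ Y ∈ G, ∀ i : ℕ, 0 < i → Subsingleton (Ext X Y i)) := by
    intro hres X hX Y hY i
    induction i generalizing X with
    | zero => exact fun h => absurd h (by omega)
    | succ n ih =>
      intro _
      rcases Nat.eq_zero_or_pos n with rfl | hn
      · exact memG.mp hY X hX
      · let S : ShortComplex A := ShortComplex.mk (kernel.ι (Projective.π X)) (Projective.π X)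
          (kernel.condition _)
        have hS : S.ShortExact := { exact := S.exact_of_f_is_kernel (kernelIsKernel _) }
        have hP : S.X₂ ∈ H := hres.1 _ inferInstance
        have hK : S.X₁ ∈ H := (hres.2 S hS hX).mpr hP
        refine (subsingleton_iff_forall_eq 0).mpr fun x => ?_
        have hg : (Ext.mk₀ S.g).comp x (zero_add (n + 1)) = 0 :=
          @Subsingleton.elim _
            (ext_subsingleton_of_projective
              (inferInstance : Projective (Projective.over X)) (by omega)) _ _
        obtain ⟨x₁, hx₁⟩ := Ext.contravariant_sequence_exact₃ hS Y x hg (by omega : 1 + n = n + 1)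
        have hx₁0 : x₁ = 0 := @Subsingleton.elim _ (ih S.X₁ hK hn) _ _
        rw [← hx₁, hx₁0, Ext.comp_zero]
  have h1C : (∀ X ∈ H, ∀ Y ∈ G, ∀ i : ℕ, 0 < i → Subsingleton (Ext X Y i)) →
      Coresolving G := by
    intro h1
    refine ⟨fun I hI => memG.mpr fun X hX => ext_subsingleton_of_injective hI one_pos, ?_⟩
    intro S hS h1'
    constructor
    · intro hX₃
      exact extG hS h1' hX₃
    · intro hX₂
      refine memG.mpr fun X hX => (subsingleton_iff_forall_eq 0).mpr fun x => ?_
      have hc : x.comp hS.extClass (by omega : 1 + 1 = 2) = 0 :=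
        @Subsingleton.elim _ (h1 X hX S.X₁ h1' 2 (by omega)) _ _
      obtain ⟨x₂, hx₂⟩ := Ext.covariant_sequence_exact₃ X hS x (by omega) hc
      haveI := memG.mp hX₂ X hX
      rw [← hx₂, Subsingleton.elim x₂ 0, Ext.zero_comp]
  have hC1 : Coresolving G →
      (∀ X ∈ H, ∀ Y ∈ G, ∀ i : ℕ, 0 < i → Subsingleton (Ext X Y i)) := by
    intro hcores X hX Y hY i
    induction i generalizing Y with
    | zero => exact fun h => absurd h (by omega)
    | succ n ih =>
      intro _
      rcases Nat.eq_zero_or_pos n with rfl | hn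
      · exact memG.mp hY X hX
      · let S : ShortComplex A := ShortComplex.mk (Injective.ι Y)
          (cokernel.π (Injective.ι Y)) (cokernel.condition _)
        have hS : S.ShortExact := { exact := S.exact_of_g_is_cokernel (cokernelIsCokernel _) }
        have hI : S.X₂ ∈ G := hcores.1 _ inferInstance
        have hC : S.X₃ ∈ G := (hcores.2 S hS hY).mpr hI
        refine (subsingleton_iff_forall_eq 0).mpr fun x => ?_
        have hg : x.comp (Ext.mk₀ S.f) (add_zero (n + 1)) = 0 :=
          @Subsingleton.elim _
            (ext_subsingleton_of_injective
              (inferInstance : Injective (Injective.under Y)) (by omega)) _ _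
        obtain ⟨x₃, hx₃⟩ := Ext.covariant_sequence_exact₁ X hS x hg (rfl : n + 1 = n + 1)
        have hx₃0 : x₃ = 0 := @Subsingleton.elim _ (ih S.X₃ hC hn) _ _
        rw [← hx₃, hx₃0, Ext.zero_comp]
  exact ⟨⟨h1R, hR1⟩, ⟨h1C, hC1⟩⟩
end

section
/- Let A and B be abelian categories with enough projective and enough injective objects, and let T : B → A be an exact functor. Consider the comma category (T↓A) and the full subcategory E = ⟨p(A,B)⟩ of objects (A,B,φ) with φ : T(B) → A a monomorphism, with the exact structure inherited from (T↓A). Then E is a Frobenius exact category if and only if A and B are Frobenius abelian categories and T sends projective objects of B to projective objects of A. -/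
/-!
STATEMENT 19: Let `A` and `B` be abelian categories with enough projectives and enough
injectives, and let `T : B ⥤ A` be an exact functor.  In the comma category `(T ↓ A)`,
consider the full subcategory `E = ⟨p(A, B)⟩` of objects `(A, B, φ)` with
`φ : T(B) → A` a monomorphism, with the exact structure inherited from `(T ↓ A)`
(componentwise short exact sequences all of whose terms lie in `E`).  Then `E` is a
Frobenius exact category if and only if `A` and `B` are Frobenius abelian categories
and `T` preserves projective objects.
-/

open CategoryTheory CategoryTheory.Limits

universe v u v' u'

variable {A : Type u} [Category.{v} A] [Abelian A]
  {B : Type u'} [Category.{v'} B] [Abelian B]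
  (T : B ⥤ A)

namespace CommaFrobenius

/-- The subcategory `⟨p(A, B)⟩` of the comma category `(T ↓ A)`: objects whose structure
map is a monomorphism. -/
def E : Set (Comma T (𝟭 A)) := {X | Mono X.hom}

/-- A pair of composable morphisms in the comma category is a (componentwise) short exact
sequence. -/
def IsSES {X Y Z : Comma T (𝟭 A)} (f : X ⟶ Y) (g : Y ⟶ Z) : Prop :=
  (∃ w : f.left ≫ g.left = 0, (ShortComplex.mk f.left g.left w).ShortExact) ∧
  (∃ w : f.right ≫ g.right = 0, (ShortComplex.mk f.right g.right w).ShortExact)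

/-- An object of `E` is projective relative to the exact structure of `E` if every
admissible epimorphism of `E` onto it splits through any morphism. -/
def ProjectiveInE (P : Comma T (𝟭 A)) : Prop :=
  P ∈ E T ∧ ∀ (X Y Z : Comma T (𝟭 A)) (f : X ⟶ Y) (g : Y ⟶ Z),
    X ∈ E T → Y ∈ E T → Z ∈ E T → IsSES T f g →
      ∀ h : P ⟶ Z, ∃ k : P ⟶ Y, k ≫ g = h

/-- An object of `E` is injective relative to the exact structure of `E`. -/
def InjectiveInE (I : Comma T (𝟭 A)) : Prop :=
  I ∈ E T ∧ ∀ (X Y Z : Comma T (𝟭 A)) (f : X ⟶ Y) (g : Y ⟶ Z),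
    X ∈ E T → Y ∈ E T → Z ∈ E T → IsSES T f g →
      ∀ h : X ⟶ I, ∃ k : Y ⟶ I, f ≫ k = h

/-- The exact category `E` has enough projectives. -/
def EnoughProjectivesInE : Prop :=
  ∀ Z ∈ E T, ∃ (X Y : Comma T (𝟭 A)) (f : X ⟶ Y) (g : Y ⟶ Z),
    X ∈ E T ∧ Y ∈ E T ∧ IsSES T f g ∧ ProjectiveInE T Y

/-- The exact category `E` has enough injectives. -/
def EnoughInjectivesInE : Prop :=
  ∀ X ∈ E T, ∃ (Y Z : Comma T (𝟭 A)) (f : X ⟶ Y) (g : Y ⟶ Z),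
    Y ∈ E T ∧ Z ∈ E T ∧ IsSES T f g ∧ InjectiveInE T Y

/-- `E` is a Frobenius exact category. -/
def FrobeniusE : Prop :=
  EnoughProjectivesInE T ∧ EnoughInjectivesInE T ∧
    ∀ P : Comma T (𝟭 A), ProjectiveInE T P ↔ InjectiveInE T P

end CommaFrobenius

open ZeroObject
set_option linter.unusedSectionVars false
set_option maxHeartbeats 1000000

section Helpers
variable {C : Type*} [Category C] [Abelian C]

lemma ses_of_epi {V W : C} (e : V ⟶ W) [Epi e] :
    (ShortComplex.mk (kernel.ι e) e (kernel.condition e)).ShortExact where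
  exact := ShortComplex.exact_of_f_is_kernel _ (kernelIsKernel e)
  mono_f := inferInstance
  epi_g := ‹_›

lemma ses_of_mono {V W : C} (m : V ⟶ W) [Mono m] :
    (ShortComplex.mk m (cokernel.π m) (cokernel.condition m)).ShortExact where
  exact := ShortComplex.exact_of_g_is_cokernel _ (cokernelIsCokernel m)
  mono_f := ‹_›
  epi_g := inferInstance

lemma ses_zero {Z : C} (hZ : IsZero Z) :
    (ShortComplex.mk (0 : Z ⟶ Z) (0 : Z ⟶ Z) (by simp)).ShortExact where
  exact := ShortComplex.exact_of_isZero_X₂ _ hZ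
  mono_f := ⟨fun _ _ _ => hZ.eq_of_tgt _ _⟩
  epi_g := ⟨fun _ _ _ => hZ.eq_of_src _ _⟩

lemma mono_cokernel_map {X Y Z : C} (u : X ⟶ Y) (v : Y ⟶ Z) [Mono u] [Mono v] :
    Mono (cokernel.map u (u ≫ v) (𝟙 X) v (by simp)) := by
  apply Preadditive.mono_of_cancel_zero
  intro W w hw
  have hfst : Epi (pullback.fst w (cokernel.π u)) := inferInstance
  have hmap : cokernel.π u ≫ cokernel.map u (u ≫ v) (𝟙 X) v (by simp) =
      v ≫ cokernel.π (u ≫ v) := by simp [cokernel.map]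
  have h2 : (pullback.snd w (cokernel.π u) ≫ v) ≫ cokernel.π (u ≫ v) = 0 := by
    rw [Category.assoc, ← hmap, ← Category.assoc, ← pullback.condition,
      Category.assoc, hw, comp_zero]
  have hE : (ShortComplex.mk (u ≫ v) (cokernel.π (u ≫ v)) (cokernel.condition _)).Exact :=
    ShortComplex.exact_of_g_is_cokernel _ (cokernelIsCokernel _)
  have hb := hE.lift_f (pullback.snd w (cokernel.π u) ≫ v) h2
  set b := hE.lift (pullback.snd w (cokernel.π u) ≫ v) h2 with hbdef
  have hbu : b ≫ u = pullback.snd w (cokernel.π u) := by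
    have : (b ≫ u) ≫ v = pullback.snd w (cokernel.π u) ≫ v := by
      simpa [Category.assoc] using hb
    exact (cancel_mono v).1 this
  have : pullback.fst w (cokernel.π u) ≫ w = 0 := by
    rw [pullback.condition, ← hbu, Category.assoc, cokernel.condition, comp_zero]
  rw [← cancel_epi (pullback.fst w (cokernel.π u)), comp_zero]
  exact this

omit [Abelian C] in
lemma projective_of_retract {K Y : C} (t : K ⟶ Y) (c : Y ⟶ K) (h : t ≫ c = 𝟙 K)
    (hY : Projective Y) : Projective K := by
  haveI := hY
  constructor
  intro W W' f e he
  refine ⟨t ≫ Projective.factorThru (c ≫ f) e, ?_⟩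
  rw [Category.assoc, Projective.factorThru_comp, ← Category.assoc, h, Category.id_comp]


lemma projective_of_mono {X Y : C} (φ : X ⟶ Y) [Mono φ] (hX : Projective X)
    (hK : Projective (cokernel φ)) : Projective Y := by
  haveI := hX; haveI := hK
  set c := cokernel.π φ with hc
  set s : cokernel φ ⟶ Y := Projective.factorThru (𝟙 (cokernel φ)) c with hs
  have hsc : s ≫ c = 𝟙 _ := Projective.factorThru_comp _ _
  have hEx : (ShortComplex.mk φ c (cokernel.condition φ)).Exact :=
    ShortComplex.exact_of_g_is_cokernel _ (cokernelIsCokernel _)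
  have hrc : (𝟙 Y - c ≫ s) ≫ c = 0 := by
    simp [Preadditive.sub_comp, Category.assoc, hsc]
  set r : Y ⟶ X := hEx.lift (𝟙 Y - c ≫ s) hrc with hr
  have hrφ : r ≫ φ = 𝟙 Y - c ≫ s := hEx.lift_f _ _
  constructor
  intro W W' f e he
  refine ⟨r ≫ Projective.factorThru (φ ≫ f) e + c ≫ Projective.factorThru (s ≫ f) e, ?_⟩
  rw [Preadditive.add_comp, Category.assoc, Category.assoc, Projective.factorThru_comp,
    Projective.factorThru_comp, ← Category.assoc, hrφ]
  simp [Preadditive.sub_comp, Category.assoc]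


end Helpers

namespace CommaFrobenius

variable [PreservesFiniteLimits T] [PreservesFiniteColimits T]

/-- `ProjectiveInE` implies the left component is projective. -/
theorem proj_left {M : Comma T (𝟭 A)} (hM : ProjectiveInE T M) : Projective M.left := by
  haveI : Mono M.hom := hM.1
  constructor
  intro V W w e he
  -- target object
  let Zc : Comma T (𝟭 A) :=
    { left := W, right := pushout M.hom (T.map w), hom := pushout.inr _ _ }
  haveI : Epi (T.map e) := preserves_epi_of_preservesColimit T e
  let gr : T.obj V ⊞ M.right ⟶ pushout M.hom (T.map w) :=
    biprod.desc (T.map e ≫ pushout.inr _ _) (pushout.inl _ _)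
  let Yc : Comma T (𝟭 A) := { left := V, right := T.obj V ⊞ M.right, hom := biprod.inl }
  haveI hgr : Epi gr := by
    constructor
    intro C u v huv
    apply pushout.hom_ext
    · have h1 : biprod.inr ≫ gr ≫ u = biprod.inr ≫ gr ≫ v := by rw [huv]
      simpa [gr] using h1
    · have h1 : biprod.inl ≫ gr ≫ u = biprod.inl ≫ gr ≫ v := by rw [huv]
      simp only [gr, biprod.inl_desc_assoc, Category.assoc] at h1
      exact (cancel_epi (T.map e)).1 h1
  have hker : (T.map (kernel.ι e) ≫ biprod.inl) ≫ gr = 0 := by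
    have hh : biprod.inl ≫ gr = T.map e ≫ pushout.inr M.hom (T.map w) := biprod.inl_desc _ _
    rw [Category.assoc, hh, ← Category.assoc, ← T.map_comp, kernel.condition, T.map_zero,
      zero_comp]
  let Xc : Comma T (𝟭 A) :=
    { left := kernel e, right := kernel gr,
      hom := kernel.lift gr (T.map (kernel.ι e) ≫ biprod.inl) hker }
  have hXmono : Mono Xc.hom := by
    have : Mono (Xc.hom ≫ kernel.ι gr) := by
      rw [show Xc.hom ≫ kernel.ι gr = T.map (kernel.ι e) ≫ biprod.inl from kernel.lift_ι _ _ _]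
      haveI : Mono (T.map (kernel.ι e)) := preserves_mono_of_preservesLimit T _
      exact mono_comp _ _
    exact mono_of_mono _ (kernel.ι gr)
  let f : Xc ⟶ Yc :=
    { left := kernel.ι e, right := kernel.ι gr, w := (kernel.lift_ι _ _ _).symm }
  let g : Yc ⟶ Zc := { left := e, right := gr, w := by simp [Yc, Zc, gr] }
  let h : M ⟶ Zc := { left := w, right := pushout.inl _ _, w := pushout.condition.symm }
  obtain ⟨k, hk⟩ := hM.2 Xc Yc Zc f g hXmono (by exact inferInstanceAs (Mono (biprod.inl : _ ⟶ _)))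
    (by exact inferInstanceAs (Mono (pushout.inr M.hom (T.map w))))
    ⟨⟨kernel.condition e, ses_of_epi e⟩, ⟨kernel.condition gr, ses_of_epi gr⟩⟩ h
  exact ⟨k.left, congrArg CommaMorphism.left hk⟩

noncomputable def zObj (R : A) : Comma T (𝟭 A) := { left := 0, right := R, hom := 0 }

noncomputable def zMor {R R' : A} (r : R ⟶ R') : zObj T R ⟶ zObj T R' :=
  { left := 0, right := r, w := by simp [zObj] }

lemma zObj_mem (R : A) : zObj T R ∈ E T :=
  ⟨fun g h _ => (T.map_isZero (isZero_zero B)).eq_of_tgt g h⟩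

lemma zSES {R R' R'' : A} (r : R ⟶ R') (r' : R' ⟶ R'') (w : r ≫ r' = 0)
    (hr : (ShortComplex.mk r r' w).ShortExact) : IsSES T (zMor T r) (zMor T r') :=
  ⟨⟨by simp [zMor], ses_zero (isZero_zero B)⟩, ⟨w, hr⟩⟩

noncomputable def dObj (X : B) : Comma T (𝟭 A) := { left := X, right := T.obj X, hom := 𝟙 _ }

noncomputable def dMor {X Y : B} (φ : X ⟶ Y) : dObj T X ⟶ dObj T Y :=
  { left := φ, right := T.map φ, w := by simp [dObj] }

lemma dObj_mem (X : B) : dObj T X ∈ E T := by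
  show Mono (𝟙 _); infer_instance

/-- `ProjectiveInE` implies the cokernel of the structure map is projective. -/
theorem proj_coker {M : Comma T (𝟭 A)} (hM : ProjectiveInE T M) :
    Projective (cokernel M.hom) := by
  constructor
  intro V W f e he
  let h : M ⟶ zObj T W :=
    { left := 0, right := cokernel.π M.hom ≫ f, w := by
        simp [zObj, cokernel.condition_assoc] }
  obtain ⟨k, hk⟩ := hM.2 (zObj T (kernel e)) (zObj T V) (zObj T W)
    (zMor T (kernel.ι e)) (zMor T e) (zObj_mem T _) (zObj_mem T _) (zObj_mem T _)
    (zSES T _ _ (kernel.condition e) (ses_of_epi e)) h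
  have hk' : k.right ≫ e = cokernel.π M.hom ≫ f := congrArg CommaMorphism.right hk
  have hz : M.hom ≫ k.right = 0 := by
    have := k.w
    simp only [zObj, Functor.id_map, comp_zero] at this
    exact this.symm
  refine ⟨cokernel.desc M.hom k.right hz, ?_⟩
  rw [← cancel_epi (cokernel.π M.hom)]
  exact (cokernel.π_desc_assoc M.hom k.right hz e).trans hk'

/-- `InjectiveInE` implies the right component is injective. -/
theorem inj_right {M : Comma T (𝟭 A)} (hM : InjectiveInE T M) : Injective M.right := by
  constructor
  intro U V g f hf
  let h : zObj T U ⟶ M :=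
    { left := 0, right := g, w := (T.map_isZero (isZero_zero B)).eq_of_src _ _ }
  obtain ⟨k, hk⟩ := hM.2 (zObj T U) (zObj T V) (zObj T (cokernel f))
    (zMor T f) (zMor T (cokernel.π f)) (zObj_mem T _) (zObj_mem T _) (zObj_mem T _)
    (zSES T _ _ (cokernel.condition f) (ses_of_mono f)) h
  exact ⟨k.right, congrArg CommaMorphism.right hk⟩

/-- `InjectiveInE` implies the left component is injective. -/
theorem inj_left {M : Comma T (𝟭 A)} (hM : InjectiveInE T M) : Injective M.left := by
  constructor
  intro U V g f hf
  let h : dObj T U ⟶ M :=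
    { left := g, right := T.map g ≫ M.hom, w := by simp [dObj] }
  obtain ⟨k, hk⟩ := hM.2 (dObj T U) (dObj T V) (dObj T (cokernel f))
    (dMor T f) (dMor T (cokernel.π f)) (dObj_mem T _) (dObj_mem T _) (dObj_mem T _)
    ⟨⟨cokernel.condition f, ses_of_mono f⟩,
     ⟨by rw [show (dMor T f).right ≫ (dMor T (cokernel.π f)).right = T.map (f ≫ cokernel.π f)
           from (T.map_comp _ _).symm, cokernel.condition, T.map_zero]; rfl,
      (ses_of_mono f).map_of_exact T⟩⟩ h
  exact ⟨k.left, congrArg CommaMorphism.left hk⟩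

/-- Sufficiency: projective components give `ProjectiveInE`. -/
theorem proj_suff {M : Comma T (𝟭 A)} (hE : M ∈ E T) (h1 : Projective M.left)
    (h2 : Projective (cokernel M.hom)) : ProjectiveInE T M := by
  haveI : Mono M.hom := hE
  haveI := h1; haveI := h2
  refine ⟨hE, ?_⟩
  intro X Y Z f g hX hY hZ hs h
  obtain ⟨⟨wl, hl⟩, ⟨wr, hr⟩⟩ := hs
  haveI : Epi g.left := hl.epi_g
  haveI : Epi g.right := hr.epi_g
  set kB : M.left ⟶ Y.left := Projective.factorThru h.left g.left with hkBdef
  have hkB : kB ≫ g.left = h.left := Projective.factorThru_comp _ _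
  set s : cokernel M.hom ⟶ (𝟭 A).obj M.right :=
    Projective.factorThru (𝟙 (cokernel M.hom)) (cokernel.π M.hom) with hsdef
  have hsc : s ≫ cokernel.π M.hom = 𝟙 _ := Projective.factorThru_comp _ _
  have hEx : (ShortComplex.mk M.hom (cokernel.π M.hom) (cokernel.condition M.hom)).Exact :=
    ShortComplex.exact_of_g_is_cokernel _ (cokernelIsCokernel _)
  have hrc : (𝟙 ((𝟭 A).obj M.right) - cokernel.π M.hom ≫ s) ≫ cokernel.π M.hom = 0 := by
    rw [Preadditive.sub_comp, Category.assoc, hsc, Category.id_comp, Category.comp_id, sub_self]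
  set r : (𝟭 A).obj M.right ⟶ T.obj M.left :=
    hEx.lift (𝟙 ((𝟭 A).obj M.right) - cokernel.π M.hom ≫ s) hrc with hrdef
  have hrφ : r ≫ M.hom = 𝟙 ((𝟭 A).obj M.right) - cokernel.π M.hom ≫ s := hEx.lift_f _ _
  have hφr : M.hom ≫ r = 𝟙 (T.obj M.left) := by
    have h0 : (M.hom ≫ r) ≫ M.hom = 𝟙 (T.obj M.left) ≫ M.hom := by
      rw [Category.assoc, hrφ, Preadditive.comp_sub, ← Category.assoc, cokernel.condition,
        zero_comp, sub_zero, Category.comp_id, Category.id_comp]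
    exact (cancel_mono M.hom).1 h0
  set b : cokernel M.hom ⟶ Y.right := Projective.factorThru (s ≫ h.right) g.right with hbdef
  have hb : b ≫ g.right = s ≫ h.right := Projective.factorThru_comp _ _
  set kA : (𝟭 A).obj M.right ⟶ (𝟭 A).obj Y.right :=
    (show (𝟭 A).obj M.right ⟶ (𝟭 A).obj Y.right from r ≫ T.map kB ≫ Y.hom) +
    (show (𝟭 A).obj M.right ⟶ (𝟭 A).obj Y.right from cokernel.π M.hom ≫ b) with hkAdef
  have hgw : T.map g.left ≫ Z.hom = Y.hom ≫ g.right := by simpa using g.w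
  have hhw : T.map h.left ≫ Z.hom = M.hom ≫ h.right := by simpa using h.w
  have hkA : kA ≫ g.right = h.right := by
    rw [hkAdef, Preadditive.add_comp, Category.assoc, Category.assoc, Category.assoc, ← hgw,
      ← Category.assoc (T.map kB), ← T.map_comp, hkB, hhw, hb, ← Category.assoc r, hrφ,
      Preadditive.sub_comp, Category.id_comp, ← Category.assoc, sub_add_cancel]
  have hkw : T.map kB ≫ Y.hom = M.hom ≫ kA := by
    rw [hkAdef, Preadditive.comp_add, ← Category.assoc M.hom (cokernel.π M.hom),
      cokernel.condition, zero_comp, add_zero, ← Category.assoc, hφr, Category.id_comp]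
  refine ⟨{ left := kB, right := kA, w := by simpa using hkw }, ?_⟩
  apply CommaMorphism.ext
  · exact hkB
  · exact hkA

/-- Sufficiency: injective components give `InjectiveInE`. -/
theorem inj_suff {M : Comma T (𝟭 A)} (hE : M ∈ E T) (h1 : Injective M.left)
    (h2 : Injective M.right) : InjectiveInE T M := by
  haveI := h1; haveI := h2
  refine ⟨hE, ?_⟩
  intro X Y Z f g hX hY hZ hs h
  obtain ⟨⟨wl, hl⟩, ⟨wr, hr⟩⟩ := hs
  haveI : Mono f.left := hl.mono_f
  haveI : Mono f.right := hr.mono_f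
  haveI : Mono Z.hom := hZ
  haveI : Epi g.left := hl.epi_g
  set kB : Y.left ⟶ M.left := Injective.factorThru h.left f.left with hkBdef
  have hkB : f.left ≫ kB = h.left := Injective.comp_factorThru _ _
  set k0 : Y.right ⟶ M.right := Injective.factorThru h.right f.right with hk0def
  have hk0 : f.right ≫ k0 = h.right := Injective.comp_factorThru _ _
  have hfw : T.map f.left ≫ Y.hom = X.hom ≫ f.right := by simpa using f.w
  have hgw : T.map g.left ≫ Z.hom = Y.hom ≫ g.right := by simpa using g.w
  have hhw : T.map h.left ≫ M.hom = X.hom ≫ h.right := by simpa using h.w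
  set e : T.obj Y.left ⟶ M.right :=
    Y.hom ≫ k0 - show T.obj Y.left ⟶ M.right from T.map kB ≫ M.hom with hedef
  have he : T.map f.left ≫ e = 0 := by
    rw [hedef, Preadditive.comp_sub, ← Category.assoc, hfw, Category.assoc, hk0,
      ← Category.assoc, ← T.map_comp, hkB, hhw, sub_self]
  -- map the left short exact sequence by T
  have hlT := hl.map_of_exact T
  haveI := hlT.epi_g
  set ebar : T.obj Z.left ⟶ M.right := hlT.exact.desc e he with hebardef
  have hebar : T.map g.left ≫ ebar = e := hlT.exact.g_desc e he
  set wbar : Z.right ⟶ M.right := Injective.factorThru ebar Z.hom with hwbardef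
  have hwbar : Z.hom ≫ wbar = ebar := Injective.comp_factorThru _ _
  set kA : Y.right ⟶ M.right := k0 - g.right ≫ wbar with hkAdef
  have hkA : f.right ≫ kA = h.right := by
    rw [hkAdef, Preadditive.comp_sub, hk0, ← Category.assoc, wr, zero_comp, sub_zero]
  have hkw : T.map kB ≫ M.hom = Y.hom ≫ kA := by
    rw [hkAdef, Preadditive.comp_sub, ← Category.assoc, ← hgw, Category.assoc, hwbar, hebar,
      hedef]
    exact (sub_sub_cancel _ _).symm
  refine ⟨{ left := kB, right := kA, w := by simpa using hkw }, ?_⟩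
  apply CommaMorphism.ext
  · exact hkB
  · exact hkA

theorem enough_proj [EnoughProjectives A] [EnoughProjectives B] : EnoughProjectivesInE T := by
  intro Z hZ
  haveI : Mono Z.hom := hZ
  set π : Projective.over Z.left ⟶ Z.left := Projective.π Z.left with hπdef
  set ρ : Projective.over Z.right ⟶ Z.right := Projective.π Z.right with hρdef
  haveI : Epi π := inferInstanceAs (Epi (Projective.π Z.left))
  haveI : Epi ρ := inferInstanceAs (Epi (Projective.π Z.right))
  set gr : T.obj (Projective.over Z.left) ⊞ Projective.over Z.right ⟶ (𝟭 A).obj Z.right :=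
    biprod.desc (T.map π ≫ Z.hom) ρ with hgrdef
  haveI : Epi gr := by
    have h1 : biprod.inr ≫ gr = ρ := biprod.inr_desc _ _
    have h2 : Epi (biprod.inr ≫ gr) := by rw [h1]; infer_instance
    exact epi_of_epi biprod.inr gr
  let Yc : Comma T (𝟭 A) :=
    { left := Projective.over Z.left,
      right := T.obj (Projective.over Z.left) ⊞ Projective.over Z.right,
      hom := biprod.inl }
  have hker : (T.map (kernel.ι π) ≫ biprod.inl) ≫ gr = 0 := by
    have hh : (biprod.inl : T.obj (Projective.over Z.left) ⟶ _) ≫ gr = T.map π ≫ Z.hom :=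
      biprod.inl_desc _ _
    rw [Category.assoc, hh, ← Category.assoc, ← T.map_comp, kernel.condition, T.map_zero,
      zero_comp]
  let Xc : Comma T (𝟭 A) :=
    { left := kernel π, right := kernel gr,
      hom := kernel.lift gr (T.map (kernel.ι π) ≫ biprod.inl) hker }
  have hXmono : Mono Xc.hom := by
    have : Mono (Xc.hom ≫ kernel.ι gr) := by
      rw [show Xc.hom ≫ kernel.ι gr = T.map (kernel.ι π) ≫ biprod.inl from kernel.lift_ι _ _ _]
      haveI : Mono (T.map (kernel.ι π)) := preserves_mono_of_preservesLimit T _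
      exact mono_comp _ _
    exact mono_of_mono _ (kernel.ι gr)
  let f : Xc ⟶ Yc :=
    { left := kernel.ι π, right := kernel.ι gr, w := (kernel.lift_ι _ _ _).symm }
  let g : Yc ⟶ Z := { left := π, right := gr, w := (biprod.inl_desc _ _).symm }
  have hcoker : Projective (cokernel (Yc.hom)) := by
    set d : cokernel (biprod.inl : T.obj (Projective.over Z.left) ⟶ _) ⟶ Projective.over Z.right :=
      cokernel.desc _ biprod.snd biprod.inl_snd with hddef
    set v : Projective.over Z.right ⟶ cokernel (biprod.inl : T.obj (Projective.over Z.left) ⟶ _) :=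
      biprod.inr ≫ cokernel.π _ with hvdef
    have hvd : v ≫ d = 𝟙 _ := by
      rw [hvdef, hddef, Category.assoc, cokernel.π_desc, biprod.inr_snd]
    have hdv : d ≫ v = 𝟙 _ := by
      rw [← cancel_epi (cokernel.π (biprod.inl : T.obj (Projective.over Z.left) ⟶ _)),
        Category.comp_id, ← Category.assoc, hddef, cokernel.π_desc, hvdef]
      conv_rhs => rw [← Category.id_comp (cokernel.π _), ← biprod.total]
      rw [Preadditive.add_comp, Category.assoc, Category.assoc, cokernel.condition, comp_zero,
        zero_add]
    exact Projective.of_iso ⟨v, d, hvd, hdv⟩ inferInstance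
  exact ⟨Xc, Yc, f, g, hXmono, inferInstanceAs (Mono (biprod.inl : _ ⟶ _)),
    ⟨⟨kernel.condition π, ses_of_epi π⟩, ⟨kernel.condition gr, ses_of_epi gr⟩⟩,
    proj_suff T (inferInstanceAs (Mono (biprod.inl : _ ⟶ _))) inferInstance hcoker⟩

theorem enough_inj [EnoughInjectives A] [EnoughInjectives B] : EnoughInjectivesInE T := by
  intro X hX
  haveI : Mono X.hom := hX
  set ι : X.left ⟶ Injective.under X.left := Injective.ι X.left with hιdef
  haveI : Mono ι := inferInstanceAs (Mono (Injective.ι X.left))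
  haveI : Mono (T.map ι) := preserves_mono_of_preservesLimit T ι
  set q : pushout X.hom (T.map ι) ⟶ Injective.under (pushout X.hom (T.map ι)) :=
    Injective.ι _ with hqdef
  haveI : Mono q := inferInstanceAs (Mono (Injective.ι _))
  set fr : (𝟭 A).obj X.right ⟶ Injective.under (pushout X.hom (T.map ι)) :=
    pushout.inl X.hom (T.map ι) ≫ q with hfrdef
  haveI : Mono fr := mono_comp _ _
  let Yc : Comma T (𝟭 A) :=
    { left := Injective.under X.left,
      right := Injective.under (pushout X.hom (T.map ι)),
      hom := pushout.inr X.hom (T.map ι) ≫ q }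
  have hYmem : Yc ∈ E T := by
    show Mono (pushout.inr X.hom (T.map ι) ≫ q); exact mono_comp _ _
  let f : X ⟶ Yc :=
    { left := ι, right := fr, w := by
        show T.map ι ≫ pushout.inr X.hom (T.map ι) ≫ q = X.hom ≫ (𝟭 A).map fr
        rw [Functor.id_map, hfrdef, ← Category.assoc, ← pushout.condition, Category.assoc] }
  -- the induced map on cokernels
  have pf2 : T.map ι ≫ pushout.inr X.hom (T.map ι) ≫ cokernel.π (pushout.inl X.hom (T.map ι))
      = 0 := by
    rw [← Category.assoc, ← pushout.condition, Category.assoc, cokernel.condition, comp_zero]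
  set δ₂ : cokernel (T.map ι) ⟶ cokernel (pushout.inl X.hom (T.map ι)) :=
    cokernel.desc (T.map ι) (pushout.inr X.hom (T.map ι) ≫ cokernel.π _) pf2 with hδ₂def
  have hδ₂iso : IsIso δ₂ := by
    set δ₂' : cokernel (pushout.inl X.hom (T.map ι)) ⟶ cokernel (T.map ι) :=
      cokernel.desc (pushout.inl X.hom (T.map ι))
        (pushout.desc 0 (cokernel.π (T.map ι)) (by simp)) (pushout.inl_desc ..) with hδ₂'def
    refine ⟨δ₂', ?_, ?_⟩
    · rw [← cancel_epi (cokernel.π (T.map ι)), Category.comp_id, ← Category.assoc, hδ₂def,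
        cokernel.π_desc, Category.assoc, hδ₂'def, cokernel.π_desc, pushout.inr_desc]
    · rw [← cancel_epi (cokernel.π (pushout.inl X.hom (T.map ι))), Category.comp_id,
        ← Category.assoc, hδ₂'def, cokernel.π_desc]
      apply pushout.hom_ext
      · rw [← Category.assoc, pushout.inl_desc, zero_comp, cokernel.condition]
      · rw [← Category.assoc, pushout.inr_desc, hδ₂def, cokernel.π_desc]
  set δ₃ : cokernel (pushout.inl X.hom (T.map ι)) ⟶ cokernel fr :=
    cokernel.map (pushout.inl X.hom (T.map ι)) fr (𝟙 _) q (by rw [hfrdef, Category.id_comp])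
    with hδ₃def
  have hδ₃mono : Mono δ₃ := by
    rw [hδ₃def]
    exact mono_cokernel_map (pushout.inl X.hom (T.map ι)) q
  set η : T.obj (cokernel ι) ⟶ cokernel fr :=
    inv (cokernelComparison ι T) ≫ δ₂ ≫ δ₃ with hηdef
  have hηmono : Mono η := by
    haveI := hδ₂iso; haveI := hδ₃mono
    rw [hηdef]; exact mono_comp _ _
  have hδ1 : T.map (cokernel.π ι) ≫ inv (cokernelComparison ι T) = cokernel.π (T.map ι) := by
    rw [IsIso.comp_inv_eq]; exact (π_comp_cokernelComparison _ _).symm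
  let Zc : Comma T (𝟭 A) := { left := cokernel ι, right := cokernel fr, hom := η }
  have hZmem : Zc ∈ E T := hηmono
  let g : Yc ⟶ Zc :=
    { left := cokernel.π ι, right := cokernel.π fr, w := by
        show T.map (cokernel.π ι) ≫ η = (pushout.inr X.hom (T.map ι) ≫ q) ≫
          cokernel.π fr
        rw [hηdef, ← Category.assoc, hδ1, ← Category.assoc, hδ₂def,
          cokernel.π_desc, Category.assoc, hδ₃def, cokernel.π_desc, Category.assoc] }
  refine ⟨Yc, Zc, f, g, hYmem, hZmem,
    ⟨⟨cokernel.condition ι, ses_of_mono ι⟩, ⟨cokernel.condition fr, ses_of_mono fr⟩⟩,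
    inj_suff T hYmem (inferInstanceAs (Injective (Injective.under X.left)))
      (inferInstanceAs (Injective (Injective.under _)))⟩

end CommaFrobenius

open CommaFrobenius

/-- An abelian category is Frobenius if its projective and injective objects coincide. -/
def FrobeniusAbelian (C : Type*) [Category C] [Abelian C] : Prop :=
  ∀ X : C, Projective X ↔ Injective X

theorem comma_frobenius_iff
    [EnoughProjectives A] [EnoughInjectives A] [EnoughProjectives B] [EnoughInjectives B]
    [PreservesFiniteLimits T] [PreservesFiniteColimits T] :
    FrobeniusE T ↔
      (FrobeniusAbelian A ∧ FrobeniusAbelian B ∧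
        ∀ Q : B, Projective Q → Projective (T.obj Q)) := by
  constructor
  · rintro ⟨hEP, hEI, hPI⟩
    have frobA : FrobeniusAbelian A := by
      intro P
      constructor
      · intro hP
        have hproj : ProjectiveInE T (zObj T P) :=
          proj_suff T (zObj_mem T P) (inferInstanceAs (Projective (0 : B)))
            (Projective.of_iso (cokernelZeroIsoTarget (X := T.obj (0 : B)) (Y := P)).symm hP)
        exact inj_right T ((hPI _).1 hproj)
      · intro hI
        have hinj : InjectiveInE T (zObj T P) :=
          inj_suff T (zObj_mem T P) (inferInstanceAs (Injective (0 : B))) hI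
        exact Projective.of_iso (cokernelZeroIsoTarget (X := T.obj (0 : B)) (Y := P))
          (proj_coker T ((hPI _).2 hinj))
    have frobB : FrobeniusAbelian B := by
      intro Q
      constructor
      · intro hQ
        have hproj : ProjectiveInE T (dObj T Q) :=
          proj_suff T (dObj_mem T Q) hQ
            (Projective.of_iso (cokernel.ofEpi (𝟙 (T.obj Q))).symm inferInstance)
        exact inj_left T ((hPI _).1 hproj)
      · intro hJ
        let M : Comma T (𝟭 A) :=
          { left := Q, right := Injective.under (T.obj Q), hom := Injective.ι (T.obj Q) }
        have hM : M ∈ E T := inferInstanceAs (Mono (Injective.ι (T.obj Q)))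
        have hinj : InjectiveInE T M := inj_suff T hM hJ inferInstance
        exact proj_left T ((hPI _).2 hinj)
    refine ⟨frobA, frobB, ?_⟩
    intro Q hQ
    have hproj : ProjectiveInE T (dObj T Q) :=
      proj_suff T (dObj_mem T Q) hQ
        (Projective.of_iso (cokernel.ofEpi (𝟙 (T.obj Q))).symm inferInstance)
    exact (frobA _).2 (inj_right T ((hPI _).1 hproj))
  · rintro ⟨hA, hB, hT⟩
    refine ⟨enough_proj T, enough_inj T, ?_⟩
    intro M
    constructor
    · intro hM
      haveI : Mono M.hom := hM.1
      have h1 : Projective M.left := proj_left T hM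
      have h2 : Projective (cokernel M.hom) := proj_coker T hM
      have h4 : Projective M.right := projective_of_mono M.hom (hT _ h1) h2
      exact inj_suff T hM.1 ((hB _).1 h1) ((hA _).1 h4)
    · intro hM
      haveI : Mono M.hom := hM.1
      have h1 : Injective M.left := inj_left T hM
      have h2 : Injective M.right := inj_right T hM
      have h3 : Projective M.left := (hB _).2 h1
      have h4 : Projective M.right := (hA _).2 h2
      haveI h5 : Injective (T.obj M.left) := (hA _).1 (hT _ h3)
      set ρ : (𝟭 A).obj M.right ⟶ T.obj M.left := Injective.factorThru (𝟙 _) M.hom with hρ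
      have hρc : M.hom ≫ ρ = 𝟙 _ := Injective.comp_factorThru _ _
      have hu : M.hom ≫ (𝟙 ((𝟭 A).obj M.right) - ρ ≫ M.hom) = 0 := by
        rw [Preadditive.comp_sub, Category.comp_id, ← Category.assoc, hρc, Category.id_comp,
          sub_self]
      set t : cokernel M.hom ⟶ (𝟭 A).obj M.right := cokernel.desc M.hom _ hu with ht
      have htc : t ≫ cokernel.π M.hom = 𝟙 _ := by
        rw [← cancel_epi (cokernel.π M.hom), ← Category.assoc, ht, cokernel.π_desc,
          Category.comp_id, Preadditive.sub_comp, Category.id_comp, Category.assoc,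
          cokernel.condition, comp_zero, sub_zero]
      have h6 : Projective (cokernel M.hom) :=
        projective_of_retract t (cokernel.π M.hom) htc h4
      exact proj_suff T hM.1 h3 h6
end
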